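/- Suppose that X is a uniformly disconnected metric space; that is, there exists a constant c > 0 such that every finite sequence x₀, …, x_m in X (m ≥ 1) satisfies max_{1≤k≤m} d(x_k, x_{k−1}) ≥ c·d(x₀, x_m). Then X admits a Lipschitz n-mean for every integer n ≥ 2. -/

import Mathlib

noncomputable section UDAux

namespace UDMeans

variable {X : Type*} [MetricSpace X]

/-- Set of `r` such that there is a chain from `x` to `y` with all steps `≤ r`. -/
def udS (x y : X) : Set ℝ :=
  {r | ∃ m : ℕ, 1 ≤ m ∧ ∃ f : ℕ → X, f 0 = x ∧ f m = y ∧ ∀ k < m, dist (f k) (f (k+1)) ≤ r}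

/-- The chain (ultrametric) distance. -/
noncomputable def udD (x y : X) : ℝ := sInf (udS x y)

lemma dist_mem_udS (x y : X) : dist x y ∈ udS x y := by
  refine ⟨1, le_refl _, fun k => if k = 0 then x else y, by simp, by simp, ?_⟩
  intro k hk
  interval_cases k
  simp

lemma udS_nonneg {x y : X} {r : ℝ} (hr : r ∈ udS x y) : 0 ≤ r := by
  obtain ⟨m, hm, f, -, -, hstep⟩ := hr
  exact le_trans dist_nonneg (hstep 0 hm)

lemma udS_bddBelow (x y : X) : BddBelow (udS x y) := ⟨0, fun r hr => udS_nonneg hr⟩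

lemma udS_upward {x y : X} {r r' : ℝ} (h : r ∈ udS x y) (hrr : r ≤ r') : r' ∈ udS x y := by
  obtain ⟨m, hm, f, h0, hmy, hstep⟩ := h
  exact ⟨m, hm, f, h0, hmy, fun k hk => le_trans (hstep k hk) hrr⟩

lemma udS_symm {x y : X} {r : ℝ} (h : r ∈ udS x y) : r ∈ udS y x := by
  obtain ⟨m, hm, f, h0, hmy, hstep⟩ := h
  refine ⟨m, hm, fun k => f (m - k), by simp [hmy], by simp [h0], ?_⟩
  intro k hk
  have h1 : m - k = (m - (k+1)) + 1 := by omega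
  show dist (f (m - k)) (f (m - (k+1))) ≤ r
  rw [dist_comm, h1]
  exact hstep (m - (k+1)) (by omega)

lemma udS_concat {x y z : X} {r s : ℝ} (hr : r ∈ udS x y) (hs : s ∈ udS y z) :
    max r s ∈ udS x z := by
  obtain ⟨m, hm, f, hf0, hfm, hfstep⟩ := udS_upward hr (le_max_left r s)
  obtain ⟨p, hp, g, hg0, hgp, hgstep⟩ := udS_upward hs (le_max_right r s)
  refine ⟨m + p, by omega, fun k => if k < m then f k else g (k - m), ?_, ?_, ?_⟩
  · have h0m : 0 < m := hm
    simp [h0m, hf0]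
  · have : ¬ m + p < m := by omega
    simp [this, hgp]
  · intro k hk
    by_cases h1 : k < m
    · by_cases h2 : k + 1 < m
      · simpa [h1, h2] using hfstep k h1
      · have hk1 : k + 1 = m := by omega
        have : g (k + 1 - m) = f (k + 1) := by rw [hk1]; simp [hg0, hfm]
        simpa [h1, h2, hk1, hg0, hfm] using hfstep k h1
    · have h2 : ¬ k + 1 < m := by omega
      have h3 : k + 1 - m = (k - m) + 1 := by omega
      simp only [h1, h2, if_false, h3]
      exact hgstep (k - m) (by omega)

lemma udD_le_dist (x y : X) : udD x y ≤ dist x y :=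
  csInf_le (udS_bddBelow x y) (dist_mem_udS x y)

lemma udD_nonneg (x y : X) : 0 ≤ udD x y :=
  le_csInf ⟨_, dist_mem_udS x y⟩ fun r hr => udS_nonneg hr

lemma udD_self (x : X) : udD x x = 0 :=
  le_antisymm (by simpa using udD_le_dist x x) (udD_nonneg x x)

lemma udD_symm (x y : X) : udD x y = udD y x := by
  unfold udD
  congr 1
  ext r
  exact ⟨udS_symm, udS_symm⟩

lemma udD_ultra (x y z : X) : udD x z ≤ max (udD x y) (udD y z) := by
  refine le_of_forall_pos_le_add fun ε hε => ?_
  obtain ⟨r, hrS, hr⟩ := (csInf_lt_iff (udS_bddBelow x y) ⟨_, dist_mem_udS x y⟩).mp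
    (show udD x y < udD x y + ε by linarith)
  obtain ⟨s, hsS, hs⟩ := (csInf_lt_iff (udS_bddBelow y z) ⟨_, dist_mem_udS y z⟩).mp
    (show udD y z < udD y z + ε by linarith)
  have hmem := udS_concat hrS hsS
  calc udD x z ≤ max r s := csInf_le (udS_bddBelow x z) hmem
    _ ≤ max (udD x y) (udD y z) + ε :=
      max_le (le_trans hr.le (by simp [le_max_left])) (le_trans hs.le (by
        have : udD y z ≤ max (udD x y) (udD y z) := le_max_right _ _
        linarith))

variable {c : ℝ}

lemma le_udD (hc : 0 < c)
    (hud : ∀ m : ℕ, 1 ≤ m → ∀ x : Fin (m + 1) → X,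
      ∃ k : Fin m, c * dist (x 0) (x (Fin.last m)) ≤ dist (x k.castSucc) (x k.succ))
    (x y : X) : c * dist x y ≤ udD x y := by
  refine le_csInf ⟨_, dist_mem_udS x y⟩ fun r hr => ?_
  obtain ⟨m, hm, f, hf0, hfm, hstep⟩ := hr
  obtain ⟨k, hk⟩ := hud m hm (fun i => f i.val)
  have h0 : ((0 : Fin (m+1)) : ℕ) = 0 := rfl
  have hl : ((Fin.last m : Fin (m+1)) : ℕ) = m := rfl
  calc c * dist x y = c * dist (f 0) (f m) := by rw [hf0, hfm]
    _ ≤ dist (f k.castSucc.val) (f k.succ.val) := by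
        simpa [h0, hl] using hk
    _ ≤ r := by
        have : (k.succ : ℕ) = (k.castSucc : ℕ) + 1 := rfl
        rw [this]
        exact hstep k.castSucc (k.isLt)

/-- "Open ball" for the chain distance, with center always included. -/
def udB (x : X) (r : ℝ) : Set X := insert x {z | udD x z < r}

lemma mem_udB_self (x : X) (r : ℝ) : x ∈ udB x r := Set.mem_insert _ _

/-- The well-order-minimal element of the ball. -/
noncomputable def udm (x : X) (r : ℝ) : X :=
  (IsWellFounded.wf (r := @WellOrderingRel X)).min (udB x r) ⟨x, mem_udB_self x r⟩

lemma udm_mem (x : X) (r : ℝ) : udm x r ∈ udB x r :=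
  WellFounded.min_mem _ _ _

lemma udm_congr {x y : X} {r : ℝ} (h : udB x r = udB y r) : udm x r = udm y r := by
  unfold udm
  congr 1

lemma udB_eq_of_pos {x : X} {r : ℝ} (hr : 0 < r) : udB x r = {z | udD x z < r} := by
  unfold udB
  rw [Set.insert_eq_self.mpr]
  simpa [udD_self] using hr

lemma udB_eq_of_lt {x y : X} {r : ℝ} (hr : 0 < r) (h : udD x y < r) :
    udB x r = udB y r := by
  rw [udB_eq_of_pos hr, udB_eq_of_pos hr]
  ext z
  simp only [Set.mem_setOf_eq]
  constructor
  · intro hz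
    calc udD y z ≤ max (udD y x) (udD x z) := udD_ultra y x z
      _ < r := max_lt (by rwa [← udD_symm]) hz
  · intro hz
    calc udD x z ≤ max (udD x y) (udD y z) := udD_ultra x y z
      _ < r := max_lt h hz

/-- The strict order used to take minima of tuples. -/
def udlt (x y : X) : Prop :=
  x ≠ y ∧ WellOrderingRel (udm x (udD x y)) (udm y (udD x y))

section WithUD

variable (hc : 0 < c)
  (hud : ∀ m : ℕ, 1 ≤ m → ∀ x : Fin (m + 1) → X,
      ∃ k : Fin m, c * dist (x 0) (x (Fin.last m)) ≤ dist (x k.castSucc) (x k.succ))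

include hc hud

lemma udD_pos {x y : X} (h : x ≠ y) : 0 < udD x y := by
  have h1 := le_udD hc hud x y
  have h2 : 0 < dist x y := dist_pos.mpr h
  nlinarith

lemma udm_ne {x y : X} (h : x ≠ y) : udm x (udD x y) ≠ udm y (udD x y) := by
  intro heq
  set r := udD x y with hr
  have hrpos : 0 < r := udD_pos hc hud h
  have hx := udm_mem x r
  have hy := udm_mem y r
  rw [udB_eq_of_pos hrpos] at hx
  rw [udB_eq_of_pos hrpos] at hy
  rw [heq] at hx
  have : udD x y ≤ max (udD x (udm y r)) (udD (udm y r) y) := udD_ultra _ _ _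
  have h2 : udD (udm y r) y < r := by rw [udD_symm]; exact hy
  exact absurd (lt_of_le_of_lt this (max_lt hx h2)) (lt_irrefl r)

lemma udlt_trichotomy (x y : X) : udlt x y ∨ x = y ∨ udlt y x := by
  by_cases h : x = y
  · exact Or.inr (Or.inl h)
  rcases trichotomous_of WellOrderingRel (udm x (udD x y)) (udm y (udD x y)) with h1 | h1 | h1
  · exact Or.inl ⟨h, h1⟩
  · exact absurd h1 (udm_ne hc hud h)
  · refine Or.inr (Or.inr ⟨Ne.symm h, ?_⟩)
    rwa [udD_symm y x]

lemma udlt_key {x y z : X} (h1 : udlt x y) (h2 : udlt y z) :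
    udlt x z ∧ udD x z = max (udD x y) (udD y z) := by
  obtain ⟨hxy, w1⟩ := h1
  obtain ⟨hyz, w2⟩ := h2
  have hxz : x ≠ z := by
    rintro rfl
    rw [udD_symm y x] at w2
    exact asymm w1 w2
  set r1 := udD x y with hr1
  set r2 := udD y z with hr2
  set r3 := udD x z with hr3
  have p1 : 0 < r1 := udD_pos hc hud hxy
  have p2 : 0 < r2 := udD_pos hc hud hyz
  have p3 : 0 < r3 := udD_pos hc hud hxz
  have u3 : r3 ≤ max r1 r2 := udD_ultra x y z
  have u1 : r1 ≤ max r3 r2 := by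
    have := udD_ultra x z y
    rwa [← udD_symm y z] at this
  have u2 : r2 ≤ max r1 r3 := by
    have := udD_ultra y x z
    rwa [← udD_symm x y] at this
  rcases lt_trichotomy r1 r2 with hlt | heq | hgt
  · -- r1 < r2, so r3 = r2
    have h32 : r3 = r2 := by
      refine le_antisymm (by simpa [max_eq_right hlt.le] using u3) ?_
      by_contra hcon
      push_neg at hcon
      have : max r1 r3 < r2 := max_lt hlt hcon
      linarith [u2]
    have hB : udB x r2 = udB y r2 := udB_eq_of_lt p2 (by rwa [← hr1])
    have e1 : udm x r3 = udm y r2 := by rw [h32]; exact udm_congr hB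
    have e2 : udm z r3 = udm z r2 := by rw [h32]
    refine ⟨⟨hxz, ?_⟩, by rw [h32, max_eq_right hlt.le]⟩
    rw [show udD x z = r3 from rfl, e1, e2]
    exact w2
  · -- r1 = r2 = r
    have h31 : r3 = r1 := by
      refine le_antisymm (by simpa [heq] using u3) ?_
      by_contra hcon
      push_neg at hcon
      have hB : udB x r1 = udB z r1 := udB_eq_of_lt p1 (by rwa [← hr3])
      have e : udm x r1 = udm z r1 := udm_congr hB
      rw [← heq] at w2
      rw [e] at w1
      exact asymm w1 w2
    refine ⟨⟨hxz, ?_⟩, by rw [h31, heq, max_self]⟩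
    rw [show udD x z = r3 from rfl, h31]
    rw [← heq] at w2
    exact _root_.trans w1 w2
  · -- r2 < r1, so r3 = r1
    have h31 : r3 = r1 := by
      refine le_antisymm (by simpa [max_eq_left hgt.le] using u3) ?_
      by_contra hcon
      push_neg at hcon
      have : max r3 r2 < r1 := max_lt hcon hgt
      linarith [u1]
    have hB : udB y r1 = udB z r1 := udB_eq_of_lt p1 (by rwa [← hr2])
    have e1 : udm z r3 = udm y r1 := by rw [h31]; exact (udm_congr hB).symm
    refine ⟨⟨hxz, ?_⟩, by rw [h31, max_eq_left hgt.le]⟩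
    rw [show udD x z = r3 from rfl, e1, h31]
    exact w1

lemma udlt_aux_trans {x y z : X} (h1 : udlt x y) (h2 : udlt y z) : udlt x z :=
  (udlt_key hc hud h1 h2).1

omit hc hud in
lemma udlt_irrefl (x : X) : ¬ udlt x x := fun h => h.1 rfl

end WithUD

end UDMeans

end UDAux

open UDMeans in
/-- Every uniformly disconnected metric space admits a Lipschitz
`n`-mean for every `n ≥ 2`. -/
theorem uniformly_disconnected_lipschitz_n_means
    (X : Type*) [MetricSpace X]
    (c : ℝ) (hc : 0 < c)
    (hud : ∀ m : ℕ, 1 ≤ m → ∀ x : Fin (m + 1) → X,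
      ∃ k : Fin m, c * dist (x 0) (x (Fin.last m)) ≤ dist (x k.castSucc) (x k.succ)) :
    ∀ n : ℕ, 2 ≤ n → ∃ L : ℝ, 0 ≤ L ∧ ∃ μ : (Fin n → X) → X,
      (∀ (x : Fin n → X) (π : Equiv.Perm (Fin n)), μ (x ∘ π) = μ x) ∧
      (∀ a : X, μ (fun _ => a) = a) ∧
      (∀ x y : Fin n → X, dist (μ x) (μ y) ≤ L * ∑ k, dist (x k) (y k)) := by
  classical
  intro n hn
  haveI : NeZero n := ⟨by omega⟩
  -- set up the linear order
  haveI hsto : IsStrictTotalOrder X (udlt (X := X)) :=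
    { trichotomous := fun a b h1 h2 => ((udlt_trichotomy hc hud a b).resolve_left h1).resolve_right h2
      irrefl := fun a => udlt_irrefl (X := X) a
      trans := fun a b c' => udlt_aux_trans hc hud }
  letI lo : LinearOrder X := linearOrderOfSTO (udlt (X := X))
  have hlt_iff : ∀ a b : X, a < b ↔ udlt a b := fun a b => Iff.rfl
  -- key convexity statement
  have hconv : ∀ a b w : X, a ≤ b → b ≤ w → udD a b ≤ udD a w := by
    intro a b w hab hbw
    rcases eq_or_lt_of_le hab with rfl | hab'
    · rw [udD_self]; exact udD_nonneg a w
    rcases eq_or_lt_of_le hbw with rfl | hbw'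
    · exact le_rfl
    · have := (udlt_key hc hud ((hlt_iff a b).mp hab') ((hlt_iff b w).mp hbw')).2
      rw [this]
      exact le_max_left _ _
  -- the mean: minimum of the tuple
  have himg : ∀ x : Fin n → X, (Finset.image x Finset.univ).Nonempty :=
    fun x => ⟨x 0, Finset.mem_image_of_mem x (Finset.mem_univ 0)⟩
  set μ : (Fin n → X) → X := fun x => (Finset.image x Finset.univ).min' (himg x) with hμ
  refine ⟨1 / c, by positivity, μ, ?_, ?_, ?_⟩
  · -- permutation invariance
    intro x π
    have hset : Finset.image (x ∘ π) Finset.univ = Finset.image x Finset.univ := by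
      ext a
      simp only [Finset.mem_image, Finset.mem_univ, true_and, Function.comp_apply]
      constructor
      · rintro ⟨i, rfl⟩; exact ⟨π i, rfl⟩
      · rintro ⟨j, rfl⟩; exact ⟨π.symm j, by simp⟩
    simp only [hμ]
    congr 1
  · -- idempotence
    intro a
    have : Finset.image (fun _ : Fin n => a) Finset.univ = {a} :=
      Finset.image_const Finset.univ_nonempty a
    simp only [hμ, this, Finset.min'_singleton]
  · -- Lipschitz
    have key : ∀ x y : Fin n → X, μ x ≤ μ y →
        dist (μ x) (μ y) ≤ (1 / c) * ∑ k, dist (x k) (y k) := by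
      intro x y hle
      obtain ⟨i, -, hi⟩ := Finset.mem_image.mp (Finset.min'_mem _ (himg x))
      have hyi : μ y ≤ y i := Finset.min'_le _ _ (Finset.mem_image_of_mem y (Finset.mem_univ i))
      have h1 : udD (μ x) (μ y) ≤ udD (μ x) (y i) := hconv _ _ _ hle hyi
      have hμx : μ x = x i := by rw [hμ]; exact hi.symm
      have h2 : udD (μ x) (y i) ≤ dist (x i) (y i) := by
        rw [hμx]
        exact udD_le_dist _ _
      have h3 : c * dist (μ x) (μ y) ≤ udD (μ x) (μ y) := le_udD hc hud _ _
      have h4 : dist (x i) (y i) ≤ ∑ k, dist (x k) (y k) :=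
        Finset.single_le_sum (fun k _ => dist_nonneg) (Finset.mem_univ i)
      rw [div_mul_eq_mul_div, le_div_iff₀ hc, mul_comm]
      calc c * dist (μ x) (μ y) ≤ dist (x i) (y i) := by linarith
        _ ≤ ∑ k, dist (x k) (y k) := h4
        _ = 1 * ∑ k, dist (x k) (y k) := (one_mul _).symm
    intro x y
    rcases le_total (μ x) (μ y) with h | h
    · exact key x y h
    · have := key y x h
      rw [dist_comm]
      calc dist (μ y) (μ x) ≤ (1/c) * ∑ k, dist (y k) (x k) := this
        _ = (1/c) * ∑ k, dist (x k) (y k) := by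
            congr 1
            exact Finset.sum_congr rfl fun k _ => dist_comm _ _
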